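/- arXiv:1803.00803 — 2 statements merged into one kernel-verified Lean document; each statement's English description precedes it below -/
import Mathlib

section
/- Let Q be a linear symmetric positive definite operator on a 2-dimensional inner product subspace T of R^3 with unit normal N, with eigenvalues 0 < q_- ≤ q_+. For nonzero A, B ∈ T, define sin∠(C,D) = ⟨N, C × D⟩/(‖C‖‖D‖). Then sin∠(QA, QB) = ζ · sin∠(A,B) for some ζ ∈ [q_- /q_+, q_+/q_-]. -/
open scoped RealInnerProductSpace

noncomputable def cross3 (a b : EuclideanSpace ℝ (Fin 3)) : EuclideanSpace ℝ (Fin 3) :=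
  WithLp.toLp 2 ![a 1 * b 2 - a 2 * b 1, a 2 * b 0 - a 0 * b 2, a 0 * b 1 - a 1 * b 0]

/-- signed sine of the angle between `C` and `D` in the plane with unit normal `N` -/
noncomputable def sinAngle (N C D : EuclideanSpace ℝ (Fin 3)) : ℝ :=
  ⟪N, cross3 C D⟫ / (‖C‖ * ‖D‖)

lemma key_bilin (N u v : EuclideanSpace ℝ (Fin 3)) (x y z w : ℝ) :
    ⟪N, cross3 (x • u + y • v) (z • u + w • v)⟫
      = (x * w - y * z) * ⟪N, cross3 u v⟫ := by
  simp only [cross3, WithLp.ofLp_toLp, PiLp.inner_apply, RCLike.inner_apply, conj_trivial,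
    Fin.sum_univ_three, PiLp.add_apply, PiLp.smul_apply, smul_eq_mul,
    Matrix.cons_val_zero, Matrix.cons_val_one, Matrix.head_cons,
    Matrix.cons_val_two, Matrix.tail_cons]
  ring

lemma norm_combo (u v : EuclideanSpace ℝ (Fin 3)) (hu : ‖u‖ = 1) (hv : ‖v‖ = 1)
    (huv : ⟪u, v⟫ = 0) (x y : ℝ) : ‖x • u + y • v‖ ^ 2 = x ^ 2 + y ^ 2 := by
  have h := real_inner_self_eq_norm_sq (x • u + y • v)
  rw [inner_add_add_self] at h
  have hvu : ⟪v, u⟫ = 0 := by rw [real_inner_comm]; exact huv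
  rw [← h]
  simp only [real_inner_smul_left, real_inner_smul_right, huv, hvu,
    real_inner_self_eq_norm_sq, hu, hv, norm_smul, Real.norm_eq_abs, mul_one, mul_pow, sq_abs]
  ring

lemma normbound (q1 q2 x y na nqa : ℝ) (h1 : 0 < q1) (h2 : q1 ≤ q2)
    (hna : na ^ 2 = x ^ 2 + y ^ 2) (hnqa : nqa ^ 2 = (q1 * x) ^ 2 + (q2 * y) ^ 2)
    (hna0 : 0 < na) (hnqa0 : 0 ≤ nqa) :
    0 < nqa ∧ nqa ≤ q2 * na ∧ q1 * na ≤ nqa := by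
  have hq2 : 0 < q2 := h1.trans_le h2
  have hq12 : q1 ^ 2 ≤ q2 ^ 2 := by nlinarith
  have hge : q1 ^ 2 * na ^ 2 ≤ nqa ^ 2 := by
    nlinarith [mul_nonneg (sub_nonneg.2 hq12) (sq_nonneg y)]
  have hle : nqa ^ 2 ≤ q2 ^ 2 * na ^ 2 := by
    nlinarith [mul_nonneg (sub_nonneg.2 hq12) (sq_nonneg x)]
  have hpos : 0 < nqa := by
    nlinarith [mul_pos (mul_pos h1 h1) (mul_pos hna0 hna0)]
  refine ⟨hpos, ?_, ?_⟩
  · nlinarith [mul_pos hq2 hna0]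
  · nlinarith [mul_pos h1 hna0]

lemma zetabound (q1 q2 nA nB nQA nQB : ℝ) (h1 : 0 < q1) (h2 : q1 ≤ q2)
    (hA : 0 < nA) (hB : 0 < nB) (hQA : 0 < nQA) (hQB : 0 < nQB)
    (ubA : nQA ≤ q2 * nA) (ubB : nQB ≤ q2 * nB)
    (lbA : q1 * nA ≤ nQA) (lbB : q1 * nB ≤ nQB) :
    q1 / q2 ≤ q1 * q2 * nA * nB / (nQA * nQB) ∧
      q1 * q2 * nA * nB / (nQA * nQB) ≤ q2 / q1 := by
  have hq2 : 0 < q2 := lt_of_lt_of_le h1 h2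
  constructor
  · rw [div_le_div_iff₀ hq2 (mul_pos hQA hQB)]
    nlinarith [mul_le_mul ubA ubB (le_of_lt hQB) (by positivity : (0:ℝ) ≤ q2 * nA)]
  · rw [div_le_div_iff₀ (mul_pos hQA hQB) h1]
    nlinarith [mul_le_mul lbA lbB (by positivity : (0:ℝ) ≤ q1 * nB) (le_of_lt hQA)]


theorem stmt0
    (T : Submodule ℝ (EuclideanSpace ℝ (Fin 3)))
    (hT : Module.finrank ℝ T = 2)
    (N : EuclideanSpace ℝ (Fin 3)) (hN : ‖N‖ = 1)
    (hNT : ∀ v ∈ T, ⟪N, v⟫ = 0)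
    (Q : T →ₗ[ℝ] T)
    (hQsym : ∀ u v : T, ⟪(Q u : EuclideanSpace ℝ (Fin 3)), (v : EuclideanSpace ℝ (Fin 3))⟫ = ⟪(u : EuclideanSpace ℝ (Fin 3)), (Q v : EuclideanSpace ℝ (Fin 3))⟫)
    (qm qp : ℝ) (hq0 : 0 < qm) (hqle : qm ≤ qp)
    (Em Ep : T) (hEm : ‖(Em : EuclideanSpace ℝ (Fin 3))‖ = 1)
    (hEp : ‖(Ep : EuclideanSpace ℝ (Fin 3))‖ = 1)
    (hEmEp : ⟪(Em : EuclideanSpace ℝ (Fin 3)), (Ep : EuclideanSpace ℝ (Fin 3))⟫ = 0)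
    (hQEm : Q Em = qm • Em) (hQEp : Q Ep = qp • Ep)
    (hspan : ∀ v : T, v = ⟪(v : EuclideanSpace ℝ (Fin 3)), (Em : EuclideanSpace ℝ (Fin 3))⟫ • Em
        + ⟪(v : EuclideanSpace ℝ (Fin 3)), (Ep : EuclideanSpace ℝ (Fin 3))⟫ • Ep)
    (A B : T) (hA : A ≠ 0) (hB : B ≠ 0) :
    ∃ ζ ∈ Set.Icc (qm / qp) (qp / qm),
      sinAngle N (Q A : EuclideanSpace ℝ (Fin 3)) (Q B : EuclideanSpace ℝ (Fin 3))
        = ζ * sinAngle N (A : EuclideanSpace ℝ (Fin 3)) (B : EuclideanSpace ℝ (Fin 3)) := by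
  have hqp0 : (0:ℝ) < qp := lt_of_lt_of_le hq0 hqle
  obtain ⟨a1, a2, hAs⟩ : ∃ x y : ℝ, A = x • Em + y • Ep := ⟨_, _, hspan A⟩
  obtain ⟨b1, b2, hBs⟩ : ∃ x y : ℝ, B = x • Em + y • Ep := ⟨_, _, hspan B⟩
  have hAe : (A : EuclideanSpace ℝ (Fin 3))
      = a1 • (Em : EuclideanSpace ℝ (Fin 3)) + a2 • (Ep : EuclideanSpace ℝ (Fin 3)) := by
    rw [hAs, Submodule.coe_add, Submodule.coe_smul, Submodule.coe_smul]
  have hBe : (B : EuclideanSpace ℝ (Fin 3))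
      = b1 • (Em : EuclideanSpace ℝ (Fin 3)) + b2 • (Ep : EuclideanSpace ℝ (Fin 3)) := by
    rw [hBs, Submodule.coe_add, Submodule.coe_smul, Submodule.coe_smul]
  have hQAe : (Q A : EuclideanSpace ℝ (Fin 3))
      = (qm * a1) • (Em : EuclideanSpace ℝ (Fin 3))
        + (qp * a2) • (Ep : EuclideanSpace ℝ (Fin 3)) := by
    rw [hAs, map_add, map_smul, map_smul, hQEm, hQEp, smul_smul, smul_smul,
      mul_comm a1 qm, mul_comm a2 qp, Submodule.coe_add, Submodule.coe_smul,
      Submodule.coe_smul]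
  have hQBe : (Q B : EuclideanSpace ℝ (Fin 3))
      = (qm * b1) • (Em : EuclideanSpace ℝ (Fin 3))
        + (qp * b2) • (Ep : EuclideanSpace ℝ (Fin 3)) := by
    rw [hBs, map_add, map_smul, map_smul, hQEm, hQEp, smul_smul, smul_smul,
      mul_comm b1 qm, mul_comm b2 qp, Submodule.coe_add, Submodule.coe_smul,
      Submodule.coe_smul]
  set nA := ‖(A : EuclideanSpace ℝ (Fin 3))‖ with hnA
  set nB := ‖(B : EuclideanSpace ℝ (Fin 3))‖ with hnB
  set nQA := ‖(Q A : EuclideanSpace ℝ (Fin 3))‖ with hnQA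
  set nQB := ‖(Q B : EuclideanSpace ℝ (Fin 3))‖ with hnQB
  have hnA2 : nA ^ 2 = a1 ^ 2 + a2 ^ 2 := by
    rw [hnA, hAe]; exact norm_combo _ _ hEm hEp hEmEp _ _
  have hnB2 : nB ^ 2 = b1 ^ 2 + b2 ^ 2 := by
    rw [hnB, hBe]; exact norm_combo _ _ hEm hEp hEmEp _ _
  have hnQA2 : nQA ^ 2 = (qm * a1) ^ 2 + (qp * a2) ^ 2 := by
    rw [hnQA, hQAe]; exact norm_combo _ _ hEm hEp hEmEp _ _
  have hnQB2 : nQB ^ 2 = (qm * b1) ^ 2 + (qp * b2) ^ 2 := by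
    rw [hnQB, hQBe]; exact norm_combo _ _ hEm hEp hEmEp _ _
  have hA0 : 0 < nA := by
    rw [hnA, norm_pos_iff]
    exact fun h => hA (Subtype.coe_injective (by simpa using h))
  have hB0 : 0 < nB := by
    rw [hnB, norm_pos_iff]
    exact fun h => hB (Subtype.coe_injective (by simpa using h))
  obtain ⟨hQA0, hubA, hlbA⟩ := normbound qm qp a1 a2 nA nQA hq0 hqle hnA2 hnQA2 hA0
    (norm_nonneg _)
  obtain ⟨hQB0, hubB, hlbB⟩ := normbound qm qp b1 b2 nB nQB hq0 hqle hnB2 hnQB2 hB0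
    (norm_nonneg _)
  obtain ⟨hlow, hhigh⟩ := zetabound qm qp nA nB nQA nQB hq0 hqle hA0 hB0 hQA0 hQB0
    hubA hubB hlbA hlbB
  refine ⟨qm * qp * nA * nB / (nQA * nQB), ⟨hlow, hhigh⟩, ?_⟩
  have hSQ : ⟪N, cross3 (Q A : EuclideanSpace ℝ (Fin 3)) (Q B : EuclideanSpace ℝ (Fin 3))⟫
      = (qm * a1 * (qp * b2) - qp * a2 * (qm * b1))
        * ⟪N, cross3 (Em : EuclideanSpace ℝ (Fin 3)) (Ep : EuclideanSpace ℝ (Fin 3))⟫ := by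
    rw [hQAe, hQBe, key_bilin]
  have hS : ⟪N, cross3 (A : EuclideanSpace ℝ (Fin 3)) (B : EuclideanSpace ℝ (Fin 3))⟫
      = (a1 * b2 - a2 * b1)
        * ⟪N, cross3 (Em : EuclideanSpace ℝ (Fin 3)) (Ep : EuclideanSpace ℝ (Fin 3))⟫ := by
    rw [hAe, hBe, key_bilin]
  unfold sinAngle
  rw [hSQ, hS, ← hnA, ← hnB, ← hnQA, ← hnQB]
  field_simp
end

section
/- Let f : R → R be C^2 with f(0) = 0 and f'(0) = 0, and let γ(θ) = c + θV + f(θ)N where V, N ∈ R^3 are orthonormal. Suppose N̂ : R → R^3 is a unit vector field along γ with N̂(0) = N and ‖N̂(θ) − N‖ ≤ L_N‖γ(θ) − γ(0)‖, and L_N‖γ(θ) − γ(0)‖ + |f'(θ)|² < 1/2. Then the 'quadruple product' satisfies √(1+|f'(θ)|²)·cosβ(θ) = ⟨N, N̂(θ)⟩ − f'(θ)⟨V, N̂(θ)⟩ ≥ 1/2, where cosβ(θ) = ⟨V × N, (V + f'(θ)N) × N̂(θ)⟩ / ‖(V + f'(θ)N) × N̂(θ)‖ · (normalizing by ‖V ×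 N‖ = 1). -/
open scoped RealInnerProductSpace

lemma lagrange3 (a b c d : EuclideanSpace ℝ (Fin 3)) :
    ⟪cross3 a b, cross3 c d⟫ = ⟪a, c⟫ * ⟪b, d⟫ - ⟪a, d⟫ * ⟪b, c⟫ := by
  simp only [cross3, PiLp.inner_apply, RCLike.inner_apply, conj_trivial, Fin.sum_univ_three,
    Matrix.cons_val_zero, Matrix.cons_val_one, Matrix.head_cons, Matrix.cons_val_two,
    Matrix.tail_cons, WithLp.ofLp_toLp]
  ring

theorem stmt16 (f f' : ℝ → ℝ)
    (hf : ∀ θ, HasDerivAt f (f' θ) θ) (hf0 : f 0 = 0) (hf'0 : f' 0 = 0)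
    (c V N : EuclideanSpace ℝ (Fin 3))
    (hV : ‖V‖ = 1) (hNu : ‖N‖ = 1) (hVN : ⟪V, N⟫ = 0)
    (γ : ℝ → EuclideanSpace ℝ (Fin 3)) (hγ : ∀ θ, γ θ = c + θ • V + f θ • N)
    (Nh : ℝ → EuclideanSpace ℝ (Fin 3)) (hNh1 : ∀ θ, ‖Nh θ‖ = 1) (hNh0 : Nh 0 = N)
    (LN : ℝ)
    (hNhLip : ∀ θ, ‖Nh θ - N‖ ≤ LN * ‖γ θ - γ 0‖)
    (θ : ℝ)
    (hsmall : LN * ‖γ θ - γ 0‖ + |f' θ| ^ 2 < 1 / 2)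
    -- `Nh θ` is normal to the velocity `γ'(θ) = V + f'(θ) N`
    (hperp : ⟪Nh θ, V + f' θ • N⟫ = 0) :
    ⟪cross3 V N, cross3 (V + f' θ • N) (Nh θ)⟫ = ⟪N, Nh θ⟫ - f' θ * ⟪V, Nh θ⟫ ∧
    Real.sqrt (1 + |f' θ| ^ 2) *
        (⟪cross3 V N, cross3 (V + f' θ • N) (Nh θ)⟫ / ‖cross3 (V + f' θ • N) (Nh θ)‖)
      = ⟪N, Nh θ⟫ - f' θ * ⟪V, Nh θ⟫ ∧
    (1 : ℝ) / 2 ≤ ⟪N, Nh θ⟫ - f' θ * ⟪V, Nh θ⟫ := by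
  have hVV : ⟪V, V⟫ = 1 := by
    rw [real_inner_self_eq_norm_sq, hV]; norm_num
  have hNN : ⟪N, N⟫ = 1 := by
    rw [real_inner_self_eq_norm_sq, hNu]; norm_num
  have hNV : ⟪N, V⟫ = 0 := by rw [real_inner_comm]; exact hVN
  -- first part
  have h1 : ⟪cross3 V N, cross3 (V + f' θ • N) (Nh θ)⟫ = ⟪N, Nh θ⟫ - f' θ * ⟪V, Nh θ⟫ := by
    rw [lagrange3]
    rw [inner_add_right, inner_add_right, real_inner_smul_right, real_inner_smul_right,
      hVV, hNV, hVN, hNN]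
    ring
  -- perp expanded
  have hperp' : ⟪V, Nh θ⟫ + f' θ * ⟪N, Nh θ⟫ = 0 := by
    have := hperp
    rw [inner_add_right, real_inner_smul_right] at this
    have e1 : ⟪Nh θ, V⟫ = ⟪V, Nh θ⟫ := real_inner_comm _ _
    have e2 : ⟪Nh θ, N⟫ = ⟪N, Nh θ⟫ := real_inner_comm _ _
    rw [e1, e2] at this
    exact this
  -- norm of cross
  have hnorm2 : ‖cross3 (V + f' θ • N) (Nh θ)‖ ^ 2 = 1 + |f' θ| ^ 2 := by
    have hx : ⟪cross3 (V + f' θ • N) (Nh θ), cross3 (V + f' θ • N) (Nh θ)⟫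
        = 1 + |f' θ| ^ 2 := by
      rw [lagrange3]
      have hNhNh : ⟪Nh θ, Nh θ⟫ = 1 := by
        rw [real_inner_self_eq_norm_sq, hNh1]; norm_num
      have hperp2 : ⟪V + f' θ • N, Nh θ⟫ = 0 := by
        rw [real_inner_comm]; exact hperp
      rw [hperp2, hNhNh]
      rw [inner_add_left, inner_add_right, inner_add_right, real_inner_smul_left,
        real_inner_smul_left, real_inner_smul_right, real_inner_smul_right,
        hVV, hNV, hVN, hNN, sq_abs]
      ring
    rw [← real_inner_self_eq_norm_sq, hx]
  have hnc : ‖cross3 (V + f' θ • N) (Nh θ)‖ = Real.sqrt (1 + |f' θ| ^ 2) := by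
    rw [← hnorm2, Real.sqrt_sq (norm_nonneg _)]
  have hpos : (0:ℝ) < Real.sqrt (1 + |f' θ| ^ 2) := by
    apply Real.sqrt_pos.2; positivity
  refine ⟨h1, ?_, ?_⟩
  · rw [h1, hnc, mul_div_assoc']
    field_simp
  · -- ⟪N, Nh θ⟫ ≥ 1 - ‖Nh θ - N‖
    have hNNh : 1 - LN * ‖γ θ - γ 0‖ ≤ ⟪N, Nh θ⟫ := by
      have h2 : ⟪N, Nh θ⟫ = 1 + ⟪N, Nh θ - N⟫ := by
        rw [inner_sub_right, hNN]; ring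
      have h3 : |⟪N, Nh θ - N⟫| ≤ ‖Nh θ - N‖ := by
        calc |⟪N, Nh θ - N⟫| ≤ ‖N‖ * ‖Nh θ - N‖ := abs_real_inner_le_norm _ _
          _ = ‖Nh θ - N‖ := by rw [hNu, one_mul]
      have h4 := (abs_le.1 (h3.trans (hNhLip θ))).1
      linarith
    have hNNh2 : (1:ℝ)/2 ≤ ⟪N, Nh θ⟫ := by nlinarith [sq_nonneg (f' θ), abs_nonneg (f' θ)]
    have hVNh : ⟪V, Nh θ⟫ = - (f' θ * ⟪N, Nh θ⟫) := by linarith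
    rw [hVNh]
    nlinarith [sq_nonneg (f' θ), sq_abs (f' θ)]
end
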